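/- Let T be a tree and let R be a set of vertices of T such that every two distinct vertices of R are adjacent or joined by a path of length 2 whose two edges receive distinct labels from a labeling of the edges incident to each vertex with at most p = 2m+n types. Then |R| ≤ 2m+n+1, and this bound is attained by the star K_{1,2m+n} with all edges of distinct types. -/

import Mathlib

/-- An `(m,n)`-colored mixed graph: a simple underlying graph together with a
labeling `lab` of ordered adjacent pairs.  Arcs get labels with absolute value in
`{1,...,m}` (reversal negates the label) and edges get labels in
`{m+1,...,m+n}` (reversal preserves the label).  Non-adjacent pairs get `0`. -/
structure CMG (V : Type) (m n : ℕ) where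
  G : SimpleGraph V
  lab : V → V → ℤ
  lab_eq_zero : ∀ ⦃u v : V⦄, ¬ G.Adj u v → lab u v = 0
  lab_mem : ∀ ⦃u v : V⦄, G.Adj u v →
    (1 ≤ lab u v ∧ lab u v ≤ (m : ℤ) + n) ∨ (-(m : ℤ) ≤ lab u v ∧ lab u v ≤ -1)
  lab_rev_arc : ∀ ⦃u v : V⦄, G.Adj u v → lab u v ≤ (m : ℤ) → lab v u = - lab u v
  lab_rev_edge : ∀ ⦃u v : V⦄, G.Adj u v → (m : ℤ) < lab u v → lab v u = lab u v

/-- `u` sees `v`: they are adjacent or joined by a special 2-path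
(a 2-path `u-w-v` with `lab u w ≠ lab v w`). -/
def CMG.sees {V : Type} {m n : ℕ} (H : CMG V m n) (u v : V) : Prop :=
  H.G.Adj u v ∨ ∃ w : V, H.G.Adj u w ∧ H.G.Adj v w ∧ H.lab u w ≠ H.lab v w

open SimpleGraph

lemma noC3 {V : Type} {G : SimpleGraph V} (hG : G.IsAcyclic) {a b c : V}
    (hab : G.Adj a b) (hbc : G.Adj b c) (hca : G.Adj c a) : False := by
  apply hG (Walk.cons hab (Walk.cons hbc (Walk.cons hca Walk.nil)))
  simp [Walk.isCycle_def, Walk.isTrail_def, hab.ne, hbc.ne, hca.ne, hab.ne', hbc.ne', hca.ne',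
    Sym2.eq_iff]

lemma noC4 {V : Type} {G : SimpleGraph V} (hG : G.IsAcyclic) {a b c d : V}
    (hab : G.Adj a b) (hbc : G.Adj b c) (hcd : G.Adj c d) (hda : G.Adj d a)
    (hac : a ≠ c) (hbd : b ≠ d) : False := by
  apply hG (Walk.cons hab (Walk.cons hbc (Walk.cons hcd (Walk.cons hda Walk.nil))))
  simp [Walk.isCycle_def, Walk.isTrail_def, hab.ne, hbc.ne, hcd.ne, hda.ne,
    hab.ne', hbc.ne', hcd.ne', hda.ne', hac, hbd, hac.symm, hbd.symm, Sym2.eq_iff]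

lemma noC5 {V : Type} {G : SimpleGraph V} (hG : G.IsAcyclic) {a b c d e : V}
    (hab : G.Adj a b) (hbc : G.Adj b c) (hcd : G.Adj c d) (hde : G.Adj d e) (hea : G.Adj e a)
    (hac : a ≠ c) (had : a ≠ d) (hbd : b ≠ d) (hbe : b ≠ e) (hce : c ≠ e) : False := by
  apply hG (Walk.cons hab (Walk.cons hbc (Walk.cons hcd (Walk.cons hde (Walk.cons hea Walk.nil)))))
  simp [Walk.isCycle_def, Walk.isTrail_def, hab.ne, hbc.ne, hcd.ne, hde.ne, hea.ne,
    hab.ne', hbc.ne', hcd.ne', hde.ne', hea.ne',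
    hac, had, hbd, hbe, hce, hac.symm, had.symm, hbd.symm, hbe.symm, hce.symm, Sym2.eq_iff]

lemma noC6 {V : Type} {G : SimpleGraph V} (hG : G.IsAcyclic) {a b c d e f : V}
    (hab : G.Adj a b) (hbc : G.Adj b c) (hcd : G.Adj c d) (hde : G.Adj d e) (hef : G.Adj e f)
    (hfa : G.Adj f a)
    (hac : a ≠ c) (had : a ≠ d) (hae : a ≠ e) (hbd : b ≠ d) (hbe : b ≠ e) (hbf : b ≠ f)
    (hce : c ≠ e) (hcf : c ≠ f) (hdf : d ≠ f) : False := by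
  apply hG (Walk.cons hab (Walk.cons hbc (Walk.cons hcd (Walk.cons hde
    (Walk.cons hef (Walk.cons hfa Walk.nil))))))
  simp [Walk.isCycle_def, Walk.isTrail_def, hab.ne, hbc.ne, hcd.ne, hde.ne, hef.ne, hfa.ne,
    hab.ne', hbc.ne', hcd.ne', hde.ne', hef.ne', hfa.ne',
    hac, had, hae, hbd, hbe, hbf, hce, hcf, hdf,
    hac.symm, had.symm, hae.symm, hbd.symm, hbe.symm, hbf.symm, hce.symm, hcf.symm, hdf.symm,
    Sym2.eq_iff]

lemma cmg_bound (m n : ℕ) (V : Type) (H : CMG V m n) (hT : H.G.IsTree)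
    (R : Finset V) (hR : ∀ u ∈ R, ∀ v ∈ R, u ≠ v → H.sees u v) :
    R.card ≤ 2 * m + n + 1 := by
  classical
  have hA : H.G.IsAcyclic := hT.2
  by_cases h1 : R.card ≤ 1
  · omega
  push_neg at h1
  obtain ⟨u, hu, v, hv, huv⟩ := Finset.one_lt_card.mp h1
  by_cases hna : ∃ u ∈ R, ∃ v ∈ R, u ≠ v ∧ ¬ H.G.Adj u v
  · clear hu hv huv u v
    obtain ⟨u, hu, v, hv, huv, hnadj⟩ := hna
    obtain ⟨w, huw, hvw, hlw⟩ := (hR u hu v hv huv).resolve_left hnadj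
    -- every element of R other than w is adjacent to w
    have key : ∀ x ∈ R, x ≠ w → H.G.Adj x w := by
      intro x hx hxw
      by_cases hxu : x = u
      · exact hxu ▸ huw
      by_cases hxv : x = v
      · exact hxv ▸ hvw
      have hsu := hR x hx u hu hxu
      have hsv := hR x hx v hv hxv
      rcases hsu with hxuA | ⟨y, hxy, huy, -⟩
      · rcases hsv with hxvA | ⟨z, hxz, hvz, -⟩
        · exact absurd (noC4 hA hxuA.symm hxvA hvw huw.symm huv hxw) id
        · by_cases hzw : z = w
          · exact hzw ▸ hxz
          by_cases hzu : z = u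
          · exact absurd (hzu ▸ hvz).symm hnadj
          exact absurd (noC5 hA hxuA.symm hxz hvz.symm hvw huw.symm
            (Ne.symm hzu) huv hxv hxw hzw) id
      · by_cases hyw : y = w
        · exact hyw ▸ hxy
        by_cases hyv : y = v
        · exact absurd (hyv ▸ huy) hnadj
        rcases hsv with hxvA | ⟨z, hxz, hvz, -⟩
        · exact absurd (noC5 hA hxvA.symm hxy huy.symm huw hvw.symm
            (Ne.symm hyv) (Ne.symm huv) hxu hxw hyw) id
        · by_cases hzw : z = w
          · exact hzw ▸ hxz
          by_cases hzu : z = u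
          · exact absurd (hzu ▸ hvz).symm hnadj
          by_cases hyz : y = z
          · have hyv' : H.G.Adj y v := by rw [hyz]; exact hvz.symm
            exact absurd (noC4 hA huy hyv' hvw huw.symm huv hyw) id
          · exact absurd (noC6 hA huw.symm huy hxy.symm hxz hvz.symm hvw
              (Ne.symm hyw) (Ne.symm hxw) (Ne.symm hzw)
              (Ne.symm hxu) (Ne.symm hzu) huv hyz hyv hxv) id
    -- labels towards w are distinct and nonzero
    set S : Finset ℤ := (Finset.Icc (-(m : ℤ)) ((m : ℤ) + n)).erase 0 with hS
    have hScard : S.card = 2 * m + n := by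
      rw [hS, Finset.card_erase_of_mem (by rw [Finset.mem_Icc]; omega), Int.card_Icc]
      omega
    have hmaps : ∀ x ∈ R.erase w, H.lab x w ∈ S := by
      intro x hx
      rw [Finset.mem_erase] at hx
      have hadj := key x hx.2 hx.1
      have := H.lab_mem hadj
      simp only [hS, Finset.mem_erase, Finset.mem_Icc]
      omega
    have hinj : Set.InjOn (fun x => H.lab x w) (R.erase w : Set V) := by
      intro x hx y hy hxy
      simp only [Finset.coe_erase, Set.mem_diff, Finset.mem_coe, Set.mem_singleton_iff] at hx hy
      by_contra hne
      rcases hR x hx.1 y hy.1 hne with hadj | ⟨c, hxc, hyc, hlc⟩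
      · exact noC3 hA hadj (key y hy.1 hy.2) (key x hx.1 hx.2).symm
      · by_cases hcw : c = w
        · exact hlc (hcw ▸ hxy)
        · exact noC4 hA hxc hyc.symm (key y hy.1 hy.2) (key x hx.1 hx.2).symm hne hcw
    have hcard : (R.erase w).card ≤ S.card :=
      Finset.card_le_card_of_injOn _ hmaps hinj
    have : R.card ≤ (R.erase w).card + 1 := by
      calc R.card ≤ (insert w (R.erase w)).card :=
            Finset.card_le_card (Finset.subset_insert_iff.mpr subset_rfl)
        _ ≤ (R.erase w).card + 1 := Finset.card_insert_le _ _
    omega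
  · push_neg at hna
    have hadj := hna u hu v hv huv
    have hmn : 1 ≤ m + n := by
      rcases H.lab_mem hadj with ⟨h1, h2⟩ | ⟨h1, h2⟩ <;> omega
    have : ¬ (2 < R.card) := by
      intro h
      obtain ⟨a, ha, b, hb, c, hc, hab, hac, hbc⟩ := Finset.two_lt_card.mp h
      exact noC3 hA (hna a ha b hb hab) (hna b hb c hc hbc) (hna c hc a ha hac.symm)
    omega


def starG (N : ℕ) : SimpleGraph (Fin (N + 1)) where
  Adj u v := u ≠ v ∧ (u = 0 ∨ v = 0)
  symm := ⟨fun u v ⟨h1, h2⟩ => ⟨h1.symm, h2.symm⟩⟩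
  loopless := ⟨fun v h => h.1 rfl⟩

lemma starG_isTree (N : ℕ) : (starG N).IsTree := by
  constructor
  · constructor
    intro u v
    have h : ∀ x : Fin (N + 1), (starG N).Reachable x 0 := by
      intro x
      by_cases hx : x = 0
      · subst hx; exact Reachable.refl _
      · exact Adj.reachable ⟨hx, Or.inr rfl⟩
    exact (h u).trans (h v).symm
  · intro v c hc
    have h3 := hc.three_le_length
    have hnd := hc.2
    cases c with
    | nil => simp at h3
    | cons h p =>
      rename_i a
      cases p with
      | nil => simp at h3
      | cons h' q =>
        rename_i b
        simp only [Walk.support_cons, List.tail_cons] at hnd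
        rcases h'.2 with ha | hb
        · -- a = 0, hence b ≠ 0 and the vertex after b is 0 again
          cases q with
          | nil => simp at h3
          | cons h'' r =>
            rename_i c'
            have hb0 : b ≠ 0 := fun hb => h'.1 (ha.trans hb.symm)
            have hc0 : c' = 0 := (h''.2).resolve_left hb0
            rw [List.nodup_cons] at hnd
            apply hnd.1
            rw [ha, Walk.support_cons]
            exact List.mem_cons_of_mem _ (hc0 ▸ r.start_mem_support)
        · -- b = 0, hence a ≠ 0 and v = 0, which reappears at the end
          have ha0 : a ≠ 0 := fun h0 => h'.1 (h0.trans hb.symm)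
          have hv0 : v = 0 := (h.2).resolve_right ha0
          cases q with
          | nil => simp at h3
          | cons h'' r =>
            rw [Walk.support_cons, List.nodup_cons, List.nodup_cons] at hnd
            exact hnd.2.1 (hb ▸ hv0 ▸ r.end_mem_support)


def ell (m n : ℕ) (i : ℤ) : ℤ := if i ≤ (m : ℤ) + n then i else (m : ℤ) + n - i

def rev (m : ℕ) (l : ℤ) : ℤ := if l ≤ (m : ℤ) then -l else l

def starLab (m n : ℕ) (u v : Fin (2 * m + n + 1)) : ℤ :=
  if v = 0 ∧ ¬ u = 0 then ell m n u.val
  else if u = 0 ∧ ¬ v = 0 then rev m (ell m n v.val)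
  else 0

lemma starLab_to_zero {m n : ℕ} {u : Fin (2 * m + n + 1)} (hu : ¬ u = 0) :
    starLab m n u 0 = ell m n u.val := by simp [starLab, hu]

lemma starLab_from_zero {m n : ℕ} {v : Fin (2 * m + n + 1)} (hv : ¬ v = 0) :
    starLab m n 0 v = rev m (ell m n v.val) := by simp [starLab, hv]

lemma fin_facts {m n : ℕ} {u : Fin (2 * m + n + 1)} (hu : ¬ u = 0) :
    1 ≤ u.val ∧ u.val ≤ 2 * m + n := by
  refine ⟨Nat.one_le_iff_ne_zero.mpr (fun h => hu (Fin.ext (by simp [h]))), ?_⟩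
  have := u.isLt; omega

def starH (m n : ℕ) : CMG (Fin (2 * m + n + 1)) m n where
  G := starG (2 * m + n)
  lab := starLab m n
  lab_eq_zero := by
    intro u v hn
    unfold starLab
    split_ifs with h1 h2
    · exact absurd ⟨fun he => h1.2 (he ▸ h1.1), Or.inr h1.1⟩ hn
    · exact absurd ⟨fun he => h2.2 (he ▸ h2.1), Or.inl h2.1⟩ hn
    · rfl
  lab_mem := by
    intro u v ⟨hne, h0⟩
    rcases h0 with hu0 | hv0
    · have hv : ¬ v = 0 := fun h => hne (hu0.trans h.symm)
      obtain ⟨h1, h2⟩ := fin_facts hv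
      subst hu0
      rw [starLab_from_zero hv]
      unfold ell rev
      split_ifs <;> omega
    · have hu : ¬ u = 0 := fun h => hne (h.trans hv0.symm)
      obtain ⟨h1, h2⟩ := fin_facts hu
      subst hv0
      rw [starLab_to_zero hu]
      unfold ell
      split_ifs <;> omega
  lab_rev_arc := by
    intro u v ⟨hne, h0⟩ hle
    rcases h0 with hu0 | hv0
    · have hv : ¬ v = 0 := fun h => hne (hu0.trans h.symm)
      obtain ⟨h1, h2⟩ := fin_facts hv
      subst hu0
      rw [starLab_from_zero hv] at hle ⊢
      rw [starLab_to_zero hv]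
      simp only [ell, rev] at hle ⊢
      split_ifs at hle ⊢ <;> omega
    · have hu : ¬ u = 0 := fun h => hne (h.trans hv0.symm)
      obtain ⟨h1, h2⟩ := fin_facts hu
      subst hv0
      rw [starLab_to_zero hu] at hle ⊢
      rw [starLab_from_zero hu]
      simp only [ell, rev] at hle ⊢
      split_ifs at hle ⊢ <;> omega
  lab_rev_edge := by
    intro u v ⟨hne, h0⟩ hlt
    rcases h0 with hu0 | hv0
    · have hv : ¬ v = 0 := fun h => hne (hu0.trans h.symm)
      obtain ⟨h1, h2⟩ := fin_facts hv
      subst hu0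
      rw [starLab_from_zero hv] at hlt ⊢
      rw [starLab_to_zero hv]
      simp only [ell, rev] at hlt ⊢
      split_ifs at hlt ⊢ <;> omega
    · have hu : ¬ u = 0 := fun h => hne (h.trans hv0.symm)
      obtain ⟨h1, h2⟩ := fin_facts hu
      subst hv0
      rw [starLab_to_zero hu] at hlt ⊢
      rw [starLab_from_zero hu]
      simp only [ell, rev] at hlt ⊢
      split_ifs at hlt ⊢ <;> omega

lemma starH_adj {m n : ℕ} {u v : Fin (2 * m + n + 1)} (h1 : u ≠ v) (h2 : u = 0 ∨ v = 0) :
    (starH m n).G.Adj u v := ⟨h1, h2⟩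

lemma starH_sees (m n : ℕ) (u v : Fin (2 * m + n + 1)) (huv : u ≠ v) :
    (starH m n).sees u v := by
  by_cases hu : u = 0
  · exact Or.inl (starH_adj huv (Or.inl hu))
  by_cases hv : v = 0
  · exact Or.inl (starH_adj huv (Or.inr hv))
  refine Or.inr ⟨0, starH_adj hu (Or.inr rfl), starH_adj hv (Or.inr rfl), ?_⟩
  obtain ⟨hu1, hu2⟩ := fin_facts hu
  obtain ⟨hv1, hv2⟩ := fin_facts hv
  have hval : u.val ≠ v.val := fun h => huv (Fin.ext h)
  have hlab : (starH m n).lab = starLab m n := rfl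
  rw [hlab, starLab_to_zero hu, starLab_to_zero hv]
  unfold ell
  split_ifs <;> omega


theorem tree_relative_clique (m n : ℕ) :
    (∀ (V : Type) (H : CMG V m n), H.G.IsTree →
      ∀ R : Finset V, (∀ u ∈ R, ∀ v ∈ R, u ≠ v → H.sees u v) →
        R.card ≤ 2 * m + n + 1) ∧
    (∃ H : CMG (Fin (2 * m + n + 1)) m n, H.G.IsTree ∧
      ∀ u v : Fin (2 * m + n + 1), u ≠ v → H.sees u v) := by
  refine ⟨fun V H hT R hR => cmg_bound m n V H hT R hR,
    ⟨starH m n, ?_, starH_sees m n⟩⟩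
  exact starG_isTree (2 * m + n)
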